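/- If M is the freedom matroid M_w for some word w ∈ W(n,r), then the image of λ_M : S_n → W(n,r) is the principal order ideal { v ∈ W(n,r) : v ≤ w }. -/

import Mathlib

open Matroid Set

/-- The rank of a set `X` in a matroid `M`: the largest cardinality of an independent
subset of `X`. -/
noncomputable def matRk {α : Type*} (M : Matroid α) (X : Set α) : ℕ :=
  sSup {k : ℕ | ∃ I : Set α, I ⊆ X ∧ M.Indep I ∧ I.ncard = k}

/-- The set of positions of the ones of a 0-1 word of length `n`. -/
def ones {n : ℕ} (v : Fin n → Bool) : Finset (Fin n) :=
  Finset.univ.filter (fun i => v i = true)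

/-- The order on `W(n,r)`: `v ≤ w` iff `π_k(v) ≤ π_k(w)` for all `k`, where `π_k`
is the position of the `k`-th one. -/
def wordLE {n : ℕ} (v w : Fin n → Bool) : Prop :=
  (ones v).card = (ones w).card ∧
  ∀ (k : ℕ) (hv : k < (ones v).card) (hw : k < (ones w).card),
    (ones v).orderEmbOfFin rfl ⟨k, hv⟩ ≤ (ones w).orderEmbOfFin rfl ⟨k, hw⟩

/-- The flag on `Fin n` determined by a word `w` with `r` ones: `T_r` is everything,
and `T_{k-1} = { s : s < e_{π_k(w)} }` for `1 ≤ k ≤ r`. -/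
def flagOfWord {n : ℕ} (w : Fin n → Bool) (i : ℕ) : Set (Fin n) :=
  if h : i < (ones w).card
    then {s : Fin n | s < (ones w).orderEmbOfFin rfl ⟨i, h⟩} else Set.univ

/-- `λ_M(σ) = w_{M(S_σ)}`: the word of a matroid `M` on `Fin n` relative to the
reordering `σ(e_1) < ⋯ < σ(e_n)` of the ground set. -/
noncomputable def lam {n : ℕ} (M : Matroid (Fin n)) (σ : Equiv.Perm (Fin n)) :
    Fin n → Bool :=
  fun i => decide
    (matRk M (⇑σ '' {j : Fin n | j < i}) < matRk M (⇑σ '' {j : Fin n | j ≤ i}))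

section MatRkLemmas

variable {n : ℕ} {w : Fin n → Bool} {M : Matroid (Fin n)}

lemma flag_top (w : Fin n → Bool) : flagOfWord w (ones w).card = Set.univ := by
  unfold flagOfWord; rw [dif_neg (lt_irrefl _)]

lemma flag_lt (w : Fin n → Bool) {i : ℕ} (h : i < (ones w).card) :
    flagOfWord w i = {s : Fin n | s < (ones w).orderEmbOfFin rfl ⟨i, h⟩} := dif_pos h

variable (hInd : ∀ I : Set (Fin n),
    M.Indep I ↔ ∀ i ≤ (ones w).card, (I ∩ flagOfWord w i).ncard ≤ i)

include hInd

lemma indep_card_le {I : Set (Fin n)} (hI : M.Indep I) : I.ncard ≤ (ones w).card := by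
  have := (hInd I).mp hI (ones w).card le_rfl
  rwa [flag_top, Set.inter_univ] at this

lemma indep_subset {I J : Set (Fin n)} (hI : M.Indep I) (hJ : J ⊆ I) : M.Indep J := by
  rw [hInd] at hI ⊢
  intro i hi
  exact le_trans (Set.ncard_le_ncard (Set.inter_subset_inter_left _ hJ) (Set.toFinite _))
    (hI i hi)

lemma indep_empty : M.Indep ∅ := by
  rw [hInd]; intro i hi; simp

lemma zero_mem_rkSet (X : Set (Fin n)) :
    0 ∈ {k : ℕ | ∃ I : Set (Fin n), I ⊆ X ∧ M.Indep I ∧ I.ncard = k} :=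
  ⟨∅, Set.empty_subset _, indep_empty hInd, Set.ncard_empty _⟩

lemma bdd_rkSet (X : Set (Fin n)) :
    BddAbove {k : ℕ | ∃ I : Set (Fin n), I ⊆ X ∧ M.Indep I ∧ I.ncard = k} :=
  ⟨(ones w).card, fun k ⟨I, _, hI, hk⟩ => hk ▸ indep_card_le hInd hI⟩

lemma le_matRk {I X : Set (Fin n)} (hIX : I ⊆ X) (hI : M.Indep I) : I.ncard ≤ matRk M X :=
  le_csSup (bdd_rkSet hInd X) ⟨I, hIX, hI, rfl⟩

lemma matRk_le {X : Set (Fin n)} {k : ℕ} (h : ∀ I, I ⊆ X → M.Indep I → I.ncard ≤ k) :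
    matRk M X ≤ k :=
  csSup_le ⟨0, zero_mem_rkSet hInd X⟩ (fun _ ⟨I, h1, h2, h3⟩ => h3 ▸ h I h1 h2)

lemma matRk_mono {X Y : Set (Fin n)} (h : X ⊆ Y) : matRk M X ≤ matRk M Y :=
  matRk_le hInd fun I hI hI' => le_matRk hInd (hI.trans h) hI'

lemma matRk_le_card (X : Set (Fin n)) : matRk M X ≤ (ones w).card :=
  matRk_le hInd fun _ _ h => indep_card_le hInd h

lemma matRk_empty : matRk M ∅ = 0 :=
  le_antisymm (matRk_le hInd fun I hI _ => by
    simp [Set.subset_empty_iff.mp hI]) (Nat.zero_le _)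

lemma matRk_insert_le (x : Fin n) (X : Set (Fin n)) :
    matRk M (insert x X) ≤ matRk M X + 1 := by
  refine matRk_le hInd fun I hI hI' => ?_
  have h1 : I \ {x} ⊆ X := by
    intro y hy
    rcases hI hy.1 with h | h
    · exact absurd h hy.2
    · exact h
  have h2 : M.Indep (I \ {x}) := indep_subset hInd hI' Set.diff_subset
  have h3 : I.ncard ≤ (I \ {x}).ncard + 1 := by
    have : I ⊆ insert x (I \ {x}) := by
      intro y hy
      by_cases hxy : y = x
      · exact hxy ▸ Set.mem_insert _ _
      · exact Set.mem_insert_of_mem _ ⟨hy, hxy⟩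
    exact le_trans (Set.ncard_le_ncard this (Set.toFinite _)) (Set.ncard_insert_le _ _)
  exact le_trans h3 (Nat.add_le_add_right (le_matRk hInd h1 h2) 1)

lemma matRk_flag_le {i : ℕ} (hi : i ≤ (ones w).card) : matRk M (flagOfWord w i) ≤ i :=
  matRk_le hInd fun I hI h => by
    have := (hInd I).mp h i hi
    rwa [Set.inter_eq_self_of_subset_left hI] at this

end MatRkLemmas

lemma ncard_val_lt_eq {c t : ℕ} (h : t ≤ c) :
    ({j : Fin c | (j : ℕ) < t} : Set (Fin c)).ncard = t := by
  have himg : ({j : Fin c | (j : ℕ) < t} : Set (Fin c)) = (Fin.castLE h) '' Set.univ := by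
    ext j
    simp only [Set.mem_setOf_eq, Set.image_univ, Set.mem_range]
    constructor
    · intro hj; exact ⟨⟨(j : ℕ), hj⟩, Fin.ext rfl⟩
    · rintro ⟨i, rfl⟩; exact i.isLt
  rw [himg, Set.ncard_image_of_injective _ (Fin.castLE_injective h), Set.ncard_univ,
    Nat.card_eq_fintype_card, Fintype.card_fin]

lemma ncard_val_lt_le (c t : ℕ) :
    ({j : Fin c | (j : ℕ) < t} : Set (Fin c)).ncard ≤ t := by
  rcases le_or_gt t c with h | h
  · exact le_of_eq (ncard_val_lt_eq h)
  · calc ({j : Fin c | (j : ℕ) < t} : Set (Fin c)).ncard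
        ≤ (Set.univ : Set (Fin c)).ncard :=
          Set.ncard_le_ncard (Set.subset_univ _) (Set.toFinite _)
      _ = c := by rw [Set.ncard_univ, Nat.card_eq_fintype_card, Fintype.card_fin]
      _ ≤ t := le_of_lt h

lemma ncard_lt_fin {n : ℕ} (a : Fin n) : ({s : Fin n | s < a} : Set (Fin n)).ncard = (a : ℕ) := by
  have : ({s : Fin n | s < a} : Set (Fin n)) = {s : Fin n | (s : ℕ) < (a : ℕ)} := by
    ext s; exact Fin.lt_def
  rw [this]
  exact ncard_val_lt_eq (le_of_lt a.isLt)

section Freedom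

variable {n : ℕ} {w : Fin n → Bool} {M : Matroid (Fin n)}

variable (hInd : ∀ I : Set (Fin n),
    M.Indep I ↔ ∀ i ≤ (ones w).card, (I ∩ flagOfWord w i).ncard ≤ i)

include hInd

lemma indep_init (k : ℕ) :
    M.Indep ((fun j => (ones w).orderEmbOfFin rfl j) ''
      {j : Fin (ones w).card | (j : ℕ) < k}) := by
  rw [hInd]
  intro i hi
  rcases lt_or_ge i (ones w).card with h | h
  · rw [flag_lt w h]
    have hsub : ((fun j => (ones w).orderEmbOfFin rfl j) ''
        {j : Fin (ones w).card | (j : ℕ) < k}) ∩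
        {s : Fin n | s < (ones w).orderEmbOfFin rfl ⟨i, h⟩} ⊆
        (fun j => (ones w).orderEmbOfFin rfl j) ''
          {j : Fin (ones w).card | (j : ℕ) < i} := by
      rintro x ⟨⟨j, _, rfl⟩, hx2⟩
      refine ⟨j, ?_, rfl⟩
      have : j < (⟨i, h⟩ : Fin (ones w).card) :=
        ((ones w).orderEmbOfFin rfl).lt_iff_lt.mp hx2
      exact this
    calc _ ≤ ((fun j => (ones w).orderEmbOfFin rfl j) ''
          {j : Fin (ones w).card | (j : ℕ) < i}).ncard :=
        Set.ncard_le_ncard hsub (Set.toFinite _)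
      _ = ({j : Fin (ones w).card | (j : ℕ) < i}).ncard :=
        Set.ncard_image_of_injective _ ((ones w).orderEmbOfFin rfl).injective
      _ ≤ i := ncard_val_lt_le _ _
  · have hieq : i = (ones w).card := le_antisymm hi h
    subst hieq
    rw [flag_top, Set.inter_univ,
      Set.ncard_image_of_injective _ ((ones w).orderEmbOfFin rfl).injective]
    calc ({j : Fin (ones w).card | (j : ℕ) < k}).ncard
        ≤ (Set.univ : Set (Fin (ones w).card)).ncard :=
          Set.ncard_le_ncard (Set.subset_univ _) (Set.toFinite _)
      _ = (ones w).card := by rw [Set.ncard_univ, Nat.card_eq_fintype_card, Fintype.card_fin]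

lemma matRk_univ : matRk M Set.univ = (ones w).card := by
  refine le_antisymm (matRk_le_card hInd _) ?_
  have h1 := le_matRk hInd (Set.subset_univ _) (indep_init hInd (ones w).card)
  rwa [Set.ncard_image_of_injective _ ((ones w).orderEmbOfFin rfl).injective,
    ncard_val_lt_eq le_rfl] at h1

lemma rk_lower : ∀ (k : ℕ) (hk : k < (ones w).card) (X : Set (Fin n)),
    (((ones w).orderEmbOfFin rfl ⟨k, hk⟩ : Fin n) : ℕ) < X.ncard →
    ∃ I, I ⊆ X ∧ M.Indep I ∧ I.ncard = k + 1 := by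
  intro k
  induction k with
  | zero =>
    intro hk X hX
    -- find x ∈ X with p 0 ≤ x
    have hx : ∃ x ∈ X, (ones w).orderEmbOfFin rfl ⟨0, hk⟩ ≤ x := by
      by_contra hc
      push_neg at hc
      have : X ⊆ {s : Fin n | s < (ones w).orderEmbOfFin rfl ⟨0, hk⟩} := fun y hy => hc y hy
      have := Set.ncard_le_ncard this (Set.toFinite _)
      rw [ncard_lt_fin] at this
      omega
    obtain ⟨x, hxX, hxge⟩ := hx
    refine ⟨{x}, Set.singleton_subset_iff.mpr hxX, ?_, Set.ncard_singleton x⟩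
    rw [hInd]
    intro i hi
    rcases Nat.eq_zero_or_pos i with h0 | h0
    · subst h0
      rw [flag_lt w hk]
      have : ({x} : Set (Fin n)) ∩ {s : Fin n | s < (ones w).orderEmbOfFin rfl ⟨0, hk⟩} = ∅ := by
        ext y
        simp only [Set.mem_inter_iff, Set.mem_singleton_iff, Set.mem_setOf_eq,
          Set.mem_empty_iff_false, iff_false, not_and]
        rintro rfl
        exact not_lt.mpr hxge
      rw [this, Set.ncard_empty]
    · calc (({x} : Set (Fin n)) ∩ flagOfWord w i).ncard
          ≤ ({x} : Set (Fin n)).ncard :=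
            Set.ncard_le_ncard Set.inter_subset_left (Set.toFinite _)
        _ = 1 := Set.ncard_singleton x
        _ ≤ i := h0
  | succ k ih =>
    intro hk X hX
    have hk' : k < (ones w).card := Nat.lt_of_succ_lt hk
    have hmono : (((ones w).orderEmbOfFin rfl ⟨k, hk'⟩ : Fin n) : ℕ) <
        (((ones w).orderEmbOfFin rfl ⟨k+1, hk⟩ : Fin n) : ℕ) := by
      have : ((ones w).orderEmbOfFin rfl) ⟨k, hk'⟩ < ((ones w).orderEmbOfFin rfl) ⟨k+1, hk⟩ :=
        ((ones w).orderEmbOfFin rfl).strictMono (by simp [Fin.lt_def])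
      exact this
    have hx : ∃ x ∈ X, (ones w).orderEmbOfFin rfl ⟨k+1, hk⟩ ≤ x := by
      by_contra hc
      push_neg at hc
      have hsub : X ⊆ {s : Fin n | s < (ones w).orderEmbOfFin rfl ⟨k+1, hk⟩} :=
        fun y hy => hc y hy
      have := Set.ncard_le_ncard hsub (Set.toFinite _)
      rw [ncard_lt_fin] at this
      omega
    obtain ⟨x, hxX, hxge⟩ := hx
    have hX' : (((ones w).orderEmbOfFin rfl ⟨k, hk'⟩ : Fin n) : ℕ) < (X \ {x}).ncard := by
      have := Set.ncard_diff_singleton_of_mem hxX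
      omega
    obtain ⟨I, hIX, hIind, hIcard⟩ := ih hk' (X \ {x}) hX'
    have hxnotI : x ∉ I := fun h => (hIX h).2 rfl
    refine ⟨insert x I, ?_, ?_, ?_⟩
    · intro y hy
      rcases hy with rfl | hy
      · exact hxX
      · exact (hIX hy).1
    · rw [hInd]
      intro i hi
      rcases le_or_gt i (k+1) with hik | hik
      · have hilt : i < (ones w).card := lt_of_le_of_lt hik hk
        rw [flag_lt w hilt]
        have hxnot : x ∉ {s : Fin n | s < (ones w).orderEmbOfFin rfl ⟨i, hilt⟩} := by
          simp only [Set.mem_setOf_eq, not_lt]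
          calc ((ones w).orderEmbOfFin rfl) ⟨i, hilt⟩
              ≤ ((ones w).orderEmbOfFin rfl) ⟨k+1, hk⟩ :=
              ((ones w).orderEmbOfFin rfl).monotone (by simp [Fin.le_def]; omega)
            _ ≤ x := hxge
        have : insert x I ∩ {s : Fin n | s < (ones w).orderEmbOfFin rfl ⟨i, hilt⟩} =
            I ∩ {s : Fin n | s < (ones w).orderEmbOfFin rfl ⟨i, hilt⟩} := by
          ext y
          simp only [Set.mem_inter_iff, Set.mem_insert_iff]
          constructor
          · rintro ⟨rfl | hy, hy2⟩
            · exact absurd hy2 hxnot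
            · exact ⟨hy, hy2⟩
          · rintro ⟨hy, hy2⟩; exact ⟨Or.inr hy, hy2⟩
        rw [this, ← flag_lt w hilt]
        exact (hInd I).mp hIind i hi
      · calc (insert x I ∩ flagOfWord w i).ncard
            ≤ (insert x I).ncard :=
              Set.ncard_le_ncard Set.inter_subset_left (Set.toFinite _)
          _ ≤ I.ncard + 1 := Set.ncard_insert_le _ _
          _ = k + 2 := by omega
          _ ≤ i := hik
    · rw [Set.ncard_insert_of_notMem hxnotI (Set.toFinite _)]
      omega

end Freedom

-- counting lemmas

lemma count_lt_iff {n : ℕ} (Q : Finset (Fin n)) {k : ℕ} (hk : k < Q.card) (m : ℕ) :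
    ((Q.orderEmbOfFin rfl ⟨k, hk⟩ : Fin n) : ℕ) < m ↔
      k < (Q.filter (fun x : Fin n => (x : ℕ) < m)).card := by
  constructor
  · intro h
    have hsub : (Finset.Iic (⟨k, hk⟩ : Fin Q.card)).map (Q.orderEmbOfFin rfl).toEmbedding ⊆
        Q.filter (fun x : Fin n => (x : ℕ) < m) := by
      intro x hx
      simp only [Finset.mem_map, Finset.mem_Iic] at hx
      obtain ⟨j, hj, rfl⟩ := hx
      refine Finset.mem_filter.mpr ⟨Finset.orderEmbOfFin_mem _ _ _, ?_⟩
      exact lt_of_le_of_lt (by exact_mod_cast (Q.orderEmbOfFin rfl).monotone hj) h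
    have := Finset.card_le_card hsub
    rw [Finset.card_map, Fin.card_Iic] at this
    simp only [Fin.val_mk] at this
    omega
  · intro h
    by_contra hc
    push_neg at hc
    have hsub : Q.filter (fun x : Fin n => (x : ℕ) < m) ⊆
        (Finset.Iio (⟨k, hk⟩ : Fin Q.card)).map (Q.orderEmbOfFin rfl).toEmbedding := by
      intro x hx
      obtain ⟨hxQ, hxm⟩ := Finset.mem_filter.mp hx
      have : x ∈ Set.range (Q.orderEmbOfFin rfl) := by
        rw [Finset.range_orderEmbOfFin]; exact_mod_cast hxQ
      obtain ⟨j, rfl⟩ := this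
      refine Finset.mem_map.mpr ⟨j, Finset.mem_Iio.mpr ?_, rfl⟩
      have : (Q.orderEmbOfFin rfl) j < (Q.orderEmbOfFin rfl) ⟨k, hk⟩ := by
        rw [Fin.lt_def]; omega
      exact (Q.orderEmbOfFin rfl).lt_iff_lt.mp this
    have := Finset.card_le_card hsub
    rw [Finset.card_map, Fin.card_Iio] at this
    simp only [Fin.val_mk] at this
    omega

lemma count_lt_self {n : ℕ} (Q : Finset (Fin n)) {c : ℕ} (hc : c < Q.card) :
    (Q.filter (fun x : Fin n => (x : ℕ) < ((Q.orderEmbOfFin rfl ⟨c, hc⟩ : Fin n) : ℕ))).card = c := by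
  have h1 : ¬ c < (Q.filter (fun x : Fin n => (x : ℕ) <
      ((Q.orderEmbOfFin rfl ⟨c, hc⟩ : Fin n) : ℕ))).card := by
    rw [← count_lt_iff Q hc]; omega
  rcases Nat.eq_zero_or_pos c with h | h
  · omega
  · have hc' : c - 1 < Q.card := by omega
    have h2 := (count_lt_iff Q hc' ((Q.orderEmbOfFin rfl ⟨c, hc⟩ : Fin n) : ℕ)).mp ?_
    · omega
    · have : (Q.orderEmbOfFin rfl) ⟨c-1, hc'⟩ < (Q.orderEmbOfFin rfl) ⟨c, hc⟩ :=
        (Q.orderEmbOfFin rfl).strictMono (by simp [Fin.lt_def]; omega)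
      exact_mod_cast this

lemma count_univ {n m : ℕ} (hm : m ≤ n) :
    ((Finset.univ : Finset (Fin n)).filter (fun x : Fin n => (x : ℕ) < m)).card = m := by
  have : ((Finset.univ : Finset (Fin n)).filter (fun x : Fin n => (x : ℕ) < m)).image Fin.val
      = Finset.range m := by
    ext a
    simp only [Finset.mem_image, Finset.mem_filter, Finset.mem_univ, true_and, Finset.mem_range]
    constructor
    · rintro ⟨x, hx, rfl⟩; exact hx
    · intro ha; exact ⟨⟨a, lt_of_lt_of_le ha hm⟩, ha, rfl⟩
  have h2 := Finset.card_image_of_injective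
    ((Finset.univ : Finset (Fin n)).filter (fun x : Fin n => (x : ℕ) < m)) Fin.val_injective
  rw [this, Finset.card_range] at h2
  omega

lemma count_compl {n m : ℕ} (Q : Finset (Fin n)) (hm : m ≤ n) :
    (Qᶜ.filter (fun x : Fin n => (x : ℕ) < m)).card = m - (Q.filter (fun x : Fin n => (x : ℕ) < m)).card := by
  have hd : Disjoint (Q.filter (fun x : Fin n => (x : ℕ) < m)) (Qᶜ.filter (fun x : Fin n => (x : ℕ) < m)) :=
    Finset.disjoint_filter_filter (disjoint_compl_right)
  have hu : Q.filter (fun x : Fin n => (x : ℕ) < m) ∪ Qᶜ.filter (fun x : Fin n => (x : ℕ) < m)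
      = (Finset.univ : Finset (Fin n)).filter (fun x : Fin n => (x : ℕ) < m) := by
    rw [← Finset.filter_union, Finset.union_compl]
  have := Finset.card_union_of_disjoint hd
  rw [hu, count_univ hm] at this
  omega


lemma prefix_zero {n : ℕ} : ({j : Fin n | (j : ℕ) < 0} : Set (Fin n)) = ∅ := by
  ext j; simp

lemma prefix_succ {n m : ℕ} (hm : m < n) :
    ({j : Fin n | (j : ℕ) < m + 1} : Set (Fin n)) =
      insert ⟨m, hm⟩ ({j : Fin n | (j : ℕ) < m} : Set (Fin n)) := by
  ext j
  simp only [Set.mem_setOf_eq, Set.mem_insert_iff]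
  constructor
  · intro hj
    rcases Nat.lt_succ_iff_lt_or_eq.mp hj with h | h
    · exact Or.inr h
    · exact Or.inl (Fin.ext h)
  · rintro (rfl | hj)
    · simp
    · omega

lemma prefix_univ {n : ℕ} : ({j : Fin n | (j : ℕ) < n} : Set (Fin n)) = Set.univ := by
  ext j; simp [j.isLt]

lemma card_filter_succ {n : ℕ} (Q : Finset (Fin n)) {m : ℕ} (hm : m < n) :
    (Q.filter (fun x : Fin n => (x : ℕ) < m + 1)).card =
      (Q.filter (fun x : Fin n => (x : ℕ) < m)).card +
        (if (⟨m, hm⟩ : Fin n) ∈ Q then 1 else 0) := by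
  by_cases h : (⟨m, hm⟩ : Fin n) ∈ Q
  · rw [if_pos h]
    have : Q.filter (fun x : Fin n => (x : ℕ) < m + 1) =
        insert ⟨m, hm⟩ (Q.filter (fun x : Fin n => (x : ℕ) < m)) := by
      ext x
      simp only [Finset.mem_filter, Finset.mem_insert]
      constructor
      · rintro ⟨hxQ, hxm⟩
        rcases Nat.lt_succ_iff_lt_or_eq.mp hxm with h' | h'
        · exact Or.inr ⟨hxQ, h'⟩
        · exact Or.inl (Fin.ext h')
      · rintro (rfl | ⟨hxQ, hxm⟩)
        · exact ⟨h, by simp⟩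
        · exact ⟨hxQ, by omega⟩
    rw [this, Finset.card_insert_of_notMem (by simp)]
  · rw [if_neg h, Nat.add_zero]
    congr 1
    ext x
    simp only [Finset.mem_filter]
    constructor
    · rintro ⟨hxQ, hxm⟩
      refine ⟨hxQ, ?_⟩
      rcases Nat.lt_succ_iff_lt_or_eq.mp hxm with h' | h'
      · exact h'
      · exact absurd (by rw [show (⟨m, hm⟩ : Fin n) = x from Fin.ext h'.symm]; exact hxQ) h
    · rintro ⟨hxQ, hxm⟩; exact ⟨hxQ, by omega⟩

section Dir1

variable {n : ℕ} {w : Fin n → Bool} {M : Matroid (Fin n)}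

variable (hInd : ∀ I : Set (Fin n),
    M.Indep I ↔ ∀ i ≤ (ones w).card, (I ∩ flagOfWord w i).ncard ≤ i)

include hInd

lemma count_ones_lam (σ : Equiv.Perm (Fin n)) :
    ∀ m, m ≤ n → ((ones (lam M σ)).filter (fun x : Fin n => (x : ℕ) < m)).card
      = matRk M (⇑σ '' {j : Fin n | (j : ℕ) < m}) := by
  intro m
  induction m with
  | zero =>
    intro _
    rw [prefix_zero, Set.image_empty, matRk_empty hInd]
    simp
  | succ m ih =>
    intro hm
    have hm' : m < n := hm
    have hins : ⇑σ '' {j : Fin n | (j : ℕ) < m + 1} =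
        insert (σ ⟨m, hm'⟩) (⇑σ '' {j : Fin n | (j : ℕ) < m}) := by
      rw [prefix_succ hm', Set.image_insert_eq]
    have hle1 : matRk M (⇑σ '' {j : Fin n | (j : ℕ) < m}) ≤
        matRk M (⇑σ '' {j : Fin n | (j : ℕ) < m + 1}) := by
      refine matRk_mono hInd ?_
      rw [hins]
      exact Set.subset_insert _ _
    have hle2 : matRk M (⇑σ '' {j : Fin n | (j : ℕ) < m + 1}) ≤
        matRk M (⇑σ '' {j : Fin n | (j : ℕ) < m}) + 1 := by
      rw [hins]
      exact matRk_insert_le hInd _ _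
    have hmem : ((⟨m, hm'⟩ : Fin n) ∈ ones (lam M σ)) ↔
        (matRk M (⇑σ '' {j : Fin n | (j : ℕ) < m}) <
          matRk M (⇑σ '' {j : Fin n | (j : ℕ) < m + 1})) := by
      rw [ones, Finset.mem_filter]
      simp only [Finset.mem_univ, true_and, lam, decide_eq_true_eq]
      have e1 : {j : Fin n | j < (⟨m, hm'⟩ : Fin n)} = {j : Fin n | (j : ℕ) < m} := by
        ext j; exact Fin.lt_def
      have e2 : {j : Fin n | j ≤ (⟨m, hm'⟩ : Fin n)} = {j : Fin n | (j : ℕ) < m + 1} := by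
        ext j
        simp only [Set.mem_setOf_eq, Fin.le_def, Nat.lt_succ_iff]
      rw [e1, e2]
    rw [card_filter_succ _ hm', ih (le_of_lt hm')]
    by_cases h : (⟨m, hm'⟩ : Fin n) ∈ ones (lam M σ)
    · rw [if_pos h]
      have := hmem.mp h
      omega
    · rw [if_neg h]
      have hnot : ¬ (matRk M (⇑σ '' {j : Fin n | (j : ℕ) < m}) <
          matRk M (⇑σ '' {j : Fin n | (j : ℕ) < m + 1})) := fun hlt => h (hmem.mpr hlt)
      omega

lemma dir1 (σ : Equiv.Perm (Fin n)) : wordLE (lam M σ) w := by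
  have hcount := count_ones_lam hInd σ
  have hfull : (ones (lam M σ)).filter (fun x : Fin n => (x : ℕ) < n) = ones (lam M σ) :=
    Finset.filter_true_of_mem (fun x _ => x.isLt)
  have himg : ⇑σ '' {j : Fin n | (j : ℕ) < n} = Set.univ := by
    rw [prefix_univ, Set.image_univ, Equiv.range_eq_univ]
  have hQcard : (ones (lam M σ)).card = (ones w).card := by
    have := hcount n le_rfl
    rwa [hfull, himg, matRk_univ hInd] at this
  refine ⟨hQcard, ?_⟩
  intro k hv hw
  -- goal: q k ≤ p k
  set t : ℕ := (((ones w).orderEmbOfFin rfl ⟨k, hw⟩ : Fin n) : ℕ) with ht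
  have htn : t + 1 ≤ n := ((ones w).orderEmbOfFin rfl ⟨k, hw⟩).isLt
  have hncard : (⇑σ '' {j : Fin n | (j : ℕ) < t + 1}).ncard = t + 1 := by
    rw [Set.ncard_image_of_injective _ σ.injective, ncard_val_lt_eq htn]
  obtain ⟨I, hIsub, hIind, hIcard⟩ := rk_lower hInd k hw (⇑σ '' {j : Fin n | (j : ℕ) < t + 1})
    (by omega)
  have hrk : k + 1 ≤ matRk M (⇑σ '' {j : Fin n | (j : ℕ) < t + 1}) := by
    have := le_matRk hInd hIsub hIind
    omega
  have hcnt : k < ((ones (lam M σ)).filter (fun x : Fin n => (x : ℕ) < t + 1)).card := by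
    rw [hcount (t+1) htn]; omega
  have := (count_lt_iff (ones (lam M σ)) hv (t+1)).mpr hcnt
  rw [Fin.le_def]
  omega

end Dir1

-- order iso helper lemmas
lemma emb_symm {n : ℕ} (Q : Finset (Fin n)) {i : Fin n} (h : i ∈ Q) :
    Q.orderEmbOfFin rfl ((Q.orderIsoOfFin rfl).symm ⟨i, h⟩) = i := by
  rw [← Finset.coe_orderIsoOfFin_apply, OrderIso.apply_symm_apply]

lemma symm_emb {n : ℕ} (Q : Finset (Fin n)) (j : Fin Q.card) :
    (Q.orderIsoOfFin rfl).symm ⟨Q.orderEmbOfFin rfl j, Q.orderEmbOfFin_mem rfl j⟩ = j := by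
  rw [OrderIso.symm_apply_eq]
  exact Subtype.ext (Finset.coe_orderIsoOfFin_apply _ _ _).symm

lemma compl_card_eq {n : ℕ} {v w : Fin n → Bool} (hc : (ones v).card = (ones w).card) :
    (ones v)ᶜ.card = (ones w)ᶜ.card := by
  rw [Finset.card_compl, Finset.card_compl, hc]

noncomputable def wordMap {n : ℕ} (v w : Fin n → Bool)
    (hc : (ones v).card = (ones w).card) : Fin n → Fin n :=
  fun i =>
    if h : i ∈ ones v then
      (ones w).orderEmbOfFin rfl (Fin.cast hc (((ones v).orderIsoOfFin rfl).symm ⟨i, h⟩))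
    else
      (ones w)ᶜ.orderEmbOfFin rfl (Fin.cast (compl_card_eq hc)
        (((ones v)ᶜ.orderIsoOfFin rfl).symm ⟨i, Finset.mem_compl.mpr h⟩))

lemma wordMap_mem {n : ℕ} {v w : Fin n → Bool} {hc : (ones v).card = (ones w).card}
    {i : Fin n} (h : i ∈ ones v) : wordMap v w hc i ∈ ones w := by
  rw [wordMap, dif_pos h]; exact Finset.orderEmbOfFin_mem _ _ _

lemma wordMap_not_mem {n : ℕ} {v w : Fin n → Bool} {hc : (ones v).card = (ones w).card}
    {i : Fin n} (h : i ∉ ones v) : wordMap v w hc i ∈ (ones w)ᶜ := by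
  rw [wordMap, dif_neg h]; exact Finset.orderEmbOfFin_mem _ _ _

lemma wordMap_injective {n : ℕ} (v w : Fin n → Bool) (hc : (ones v).card = (ones w).card) :
    Function.Injective (wordMap v w hc) := by
  intro i j hij
  by_cases hi : i ∈ ones v <;> by_cases hj : j ∈ ones v
  · simp only [wordMap] at hij
    rw [dif_pos hi, dif_pos hj] at hij
    have h1 := ((ones w).orderEmbOfFin rfl).injective hij
    have h2 := (Fin.cast_injective hc) h1
    have h3 := (((ones v).orderIsoOfFin rfl).symm.injective) h2
    exact Subtype.mk_eq_mk.mp h3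
  · exact absurd (hij ▸ wordMap_mem hi) (Finset.mem_compl.mp (wordMap_not_mem hj))
  · exact absurd (hij.symm ▸ wordMap_mem hj) (Finset.mem_compl.mp (wordMap_not_mem hi))
  · simp only [wordMap] at hij
    rw [dif_neg hi, dif_neg hj] at hij
    have h1 := ((ones w)ᶜ.orderEmbOfFin rfl).injective hij
    have h2 := (Fin.cast_injective (compl_card_eq hc)) h1
    have h3 := (((ones v)ᶜ.orderIsoOfFin rfl).symm.injective) h2
    exact Subtype.mk_eq_mk.mp h3

lemma wordMap_emb {n : ℕ} (v w : Fin n → Bool) (hc : (ones v).card = (ones w).card)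
    (j : Fin (ones v).card) :
    wordMap v w hc ((ones v).orderEmbOfFin rfl j) =
      (ones w).orderEmbOfFin rfl (Fin.cast hc j) := by
  rw [wordMap, dif_pos ((ones v).orderEmbOfFin_mem rfl j), symm_emb]

section Dir2

variable {n : ℕ} {w : Fin n → Bool} {M : Matroid (Fin n)}

variable (hInd : ∀ I : Set (Fin n),
    M.Indep I ↔ ∀ i ≤ (ones w).card, (I ∩ flagOfWord w i).ncard ≤ i)

include hInd

lemma rk_prefix_eq (v : Fin n → Bool) (hc : (ones v).card = (ones w).card)
    (hle : ∀ (k : ℕ) (hv : k < (ones v).card) (hw : k < (ones w).card),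
      (ones v).orderEmbOfFin rfl ⟨k, hv⟩ ≤ (ones w).orderEmbOfFin rfl ⟨k, hw⟩)
    (m : ℕ) (hm : m ≤ n) :
    matRk M (wordMap v w hc '' {j : Fin n | (j : ℕ) < m})
      = ((ones v).filter (fun x : Fin n => (x : ℕ) < m)).card := by
  set c := ((ones v).filter (fun x : Fin n => (x : ℕ) < m)).card with hcdef
  have hcQ : c ≤ (ones v).card := Finset.card_filter_le _ _
  have hcm : c ≤ m := by
    have h1 : (ones v).filter (fun x : Fin n => (x : ℕ) < m) ⊆
        (Finset.univ : Finset (Fin n)).filter (fun x : Fin n => (x : ℕ) < m) :=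
      Finset.filter_subset_filter _ (Finset.subset_univ _)
    have := Finset.card_le_card h1
    rw [count_univ hm] at this
    omega
  -- lower bound
  have hlow : c ≤ matRk M (wordMap v w hc '' {j : Fin n | (j : ℕ) < m}) := by
    have hsub : ((fun j => (ones w).orderEmbOfFin rfl j) ''
        {j : Fin (ones w).card | (j : ℕ) < c}) ⊆
        wordMap v w hc '' {j : Fin n | (j : ℕ) < m} := by
      rintro x ⟨j, hj, rfl⟩
      have hjv : (j : ℕ) < (ones v).card := lt_of_lt_of_le hj hcQ
      refine ⟨(ones v).orderEmbOfFin rfl (Fin.cast hc.symm j), ?_, ?_⟩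
      · -- its value is < m
        have := (count_lt_iff (ones v) hjv m).mpr (hcdef ▸ hj)
        exact this
      · rw [wordMap_emb]
        rfl
    have h1 := le_matRk hInd hsub (indep_init hInd c)
    rwa [Set.ncard_image_of_injective _ ((ones w).orderEmbOfFin rfl).injective,
      ncard_val_lt_eq (hc ▸ hcQ)] at h1
  -- upper bound
  have hup : matRk M (wordMap v w hc '' {j : Fin n | (j : ℕ) < m}) ≤ c := by
    rcases lt_or_ge c (ones v).card with hcQ' | hcQ'
    · have hcP : c < (ones w).card := hc ▸ hcQ'
      -- m ≤ (q c).val ≤ (p c).val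
      have hqc : ¬ (((ones v).orderEmbOfFin rfl ⟨c, hcQ'⟩ : Fin n) : ℕ) < m := by
        rw [count_lt_iff (ones v) hcQ' m]
        omega
      have hqp := hle c hcQ' hcP
      set t : ℕ := (((ones w).orderEmbOfFin rfl ⟨c, hcP⟩ : Fin n) : ℕ) with htdef
      have hmt : m ≤ t := by
        have := Fin.le_def.mp hqp
        omega
      have htn : t ≤ n := le_of_lt ((ones w).orderEmbOfFin rfl ⟨c, hcP⟩).isLt
      -- count of P below p c is c
      have hPc : ((ones w).filter (fun x : Fin n => (x : ℕ) < t)).card = c :=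
        count_lt_self (ones w) hcP
      have hPcc : ((ones w)ᶜ.filter (fun x : Fin n => (x : ℕ) < t)).card = t - c := by
        rw [count_compl _ htn, hPc]
      -- the image is inside flagOfWord w c
      have hsub : wordMap v w hc '' {j : Fin n | (j : ℕ) < m} ⊆ flagOfWord w c := by
        rw [flag_lt w hcP]
        rintro x ⟨i, him, rfl⟩
        simp only [Set.mem_setOf_eq] at him ⊢
        rw [Fin.lt_def]
        by_cases h : i ∈ ones v
        · -- wordMap i = p (index), index < c
          set j := ((ones v).orderIsoOfFin rfl).symm ⟨i, h⟩ with hjdef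
          have hiemb : (ones v).orderEmbOfFin rfl j = i := emb_symm _ h
          have hidx : (j : ℕ) < c := by
            have h2 := (count_lt_iff (ones v) j.isLt m).mp
              (by rw [show (⟨(j : ℕ), j.isLt⟩ : Fin (ones v).card) = j from Fin.ext rfl,
                hiemb]; exact him)
            omega
          have : wordMap v w hc i = (ones w).orderEmbOfFin rfl (Fin.cast hc j) := by
            rw [wordMap, dif_pos h]
          rw [this]
          have : ((ones w).orderEmbOfFin rfl) (Fin.cast hc j) <
              ((ones w).orderEmbOfFin rfl) ⟨c, hcP⟩ :=
            ((ones w).orderEmbOfFin rfl).strictMono (by rw [Fin.lt_def]; simpa using hidx)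
          exact Fin.lt_def.mp this
        · set j := (((ones v)ᶜ.orderIsoOfFin rfl)).symm ⟨i, Finset.mem_compl.mpr h⟩ with hjdef
          have hiemb : (ones v)ᶜ.orderEmbOfFin rfl j = i := emb_symm _ _
          have hidx : (j : ℕ) < ((ones v)ᶜ.filter (fun x : Fin n => (x : ℕ) < m)).card := by
            have h2 := (count_lt_iff ((ones v)ᶜ) j.isLt m).mp
              (by rw [show (⟨(j : ℕ), j.isLt⟩ : Fin (ones v)ᶜ.card) = j from Fin.ext rfl,
                hiemb]; exact him)
            omega
          have hd : ((ones v)ᶜ.filter (fun x : Fin n => (x : ℕ) < m)).card = m - c := by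
            rw [count_compl _ hm]
          have hjtc : (j : ℕ) < t - c := by omega
          have hjP : (j : ℕ) < (ones w)ᶜ.card := (Fin.cast (compl_card_eq hc) j).isLt
          have h3 := (count_lt_iff ((ones w)ᶜ) hjP t).mpr (by omega)
          have : wordMap v w hc i =
              (ones w)ᶜ.orderEmbOfFin rfl (Fin.cast (compl_card_eq hc) j) := by
            rw [wordMap, dif_neg h]
          rw [this]
          have he : (⟨(j : ℕ), hjP⟩ : Fin (ones w)ᶜ.card) = Fin.cast (compl_card_eq hc) j :=
            Fin.ext rfl
          rw [he] at h3
          exact h3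
      calc matRk M (wordMap v w hc '' {j : Fin n | (j : ℕ) < m})
          ≤ matRk M (flagOfWord w c) := matRk_mono hInd hsub
        _ ≤ c := matRk_flag_le hInd (le_of_lt hcP)
    · have : c = (ones v).card := le_antisymm hcQ hcQ'
      rw [this, hc]
      exact matRk_le_card hInd _
  omega

end Dir2

section Final

variable {n : ℕ} {w : Fin n → Bool} {M : Matroid (Fin n)}

variable (hInd : ∀ I : Set (Fin n),
    M.Indep I ↔ ∀ i ≤ (ones w).card, (I ∩ flagOfWord w i).ncard ≤ i)

include hInd

lemma lam_wordMap (v : Fin n → Bool) (hc : (ones v).card = (ones w).card)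
    (hle : ∀ (k : ℕ) (hv : k < (ones v).card) (hw : k < (ones w).card),
      (ones v).orderEmbOfFin rfl ⟨k, hv⟩ ≤ (ones w).orderEmbOfFin rfl ⟨k, hw⟩)
    (σ : Equiv.Perm (Fin n)) (hσ : ⇑σ = wordMap v w hc) :
    lam M σ = v := by
  funext i
  have hm1 : (i : ℕ) ≤ n := le_of_lt i.isLt
  have hm2 : (i : ℕ) + 1 ≤ n := i.isLt
  have e1 : {j : Fin n | j < i} = {j : Fin n | (j : ℕ) < (i : ℕ)} := by
    ext j; exact Fin.lt_def
  have e2 : {j : Fin n | j ≤ i} = {j : Fin n | (j : ℕ) < (i : ℕ) + 1} := by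
    ext j; simp only [Set.mem_setOf_eq, Fin.le_def, Nat.lt_succ_iff]
  have r1 := rk_prefix_eq hInd v hc hle (i : ℕ) hm1
  have r2 := rk_prefix_eq hInd v hc hle ((i : ℕ) + 1) hm2
  have hcf := card_filter_succ (ones v) (i.isLt)
  have hmem : ((⟨(i : ℕ), i.isLt⟩ : Fin n) ∈ ones v) ↔ v i = true := by
    rw [show (⟨(i : ℕ), i.isLt⟩ : Fin n) = i from Fin.ext rfl]
    simp [ones]
  rw [lam, hσ, e1, e2, r1, r2]
  by_cases h : v i = true
  · rw [if_pos (hmem.mpr h)] at hcf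
    rw [h]
    simp only [decide_eq_true_eq]
    omega
  · rw [if_neg (fun hh => h (hmem.mp hh))] at hcf
    have : v i = false := by
      cases hv : v i
      · rfl
      · exact absurd hv h
    rw [this]
    simp only [decide_eq_false_iff_not, not_lt]
    omega

end Final


/-- If `M` is the freedom matroid `M_w` for a word `w ∈ W(n,r)`, then the
image of `λ_M : S_n → W(n,r)` is the principal order ideal `{ v ∈ W(n,r) : v ≤ w }`. -/
theorem lam_image_eq_principal_ideal {n r : ℕ} (w : Fin n → Bool)
    (hwr : (ones w).card = r)
    (M : Matroid (Fin n)) (hE : M.E = Set.univ)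
    (hInd : ∀ I : Set (Fin n),
      M.Indep I ↔ ∀ i ≤ r, (I ∩ flagOfWord w i).ncard ≤ i) :
    ∀ v : Fin n → Bool, (∃ σ : Equiv.Perm (Fin n), lam M σ = v) ↔ wordLE v w := by
  subst hwr
  intro v
  constructor
  · rintro ⟨σ, rfl⟩
    exact dir1 hInd σ
  · rintro ⟨hc, hle⟩
    have hbij : Function.Bijective (wordMap v w hc) :=
      Finite.injective_iff_bijective.mp (wordMap_injective v w hc)
    exact ⟨Equiv.ofBijective _ hbij, lam_wordMap hInd v hc hle _ rfl⟩
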